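/- Let X be an n×q real matrix with rows x_1,...,x_n, let r ≠ s be row indices, let k be a column index, and let m ∈ {1,2}. Let X' be the matrix obtained from X by exchanging the entries X_{r,k} and X_{s,k} and leaving all other entries unchanged, with rows x'_1,...,x'_n. Then for every row index v with v ≠ r and v ≠ s: ∑_{j=1}^{q} |x'_{r,j} − x'_{v,j}|^m = ∑_{j=1}^{q} |x_{r,j} − x_{v,j}|^m + (|X_{s,k} − X_{v,k}|^m − |X_{r,k} − X_{v,k}|^m), and ∑_{j=1}^{q} |x'_{s,j} − x'_{v,j}|^m = ∑_{j=1}^{q} |x_{s,j} − x_{v,j}|^m − (|X_{s,k} − X_{v,k}|^m − |X_{r,k} − X_{v,k}|^m). Moreover, for any two row indices v, w both different from r and s, ∑_{j=1}^{q} |x'_{v,j} − x'_{w,j}|^m = ∑_{j=1}^{q} |x_{v,j} − x_{w,j}|^m. -/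
import Mathlib


/-- Updating formulas for the inter-site distances after exchanging two entries
within one column of a design matrix. -/
theorem exchange_update_distances (n q : ℕ) (X X' : Matrix (Fin n) (Fin q) ℝ)
    (r s : Fin n) (hrs : r ≠ s) (k : Fin q) (m : ℕ) (hm : m = 1 ∨ m = 2)
    (h1 : X' r k = X s k) (h2 : X' s k = X r k)
    (h3 : ∀ i j, ¬(i = r ∧ j = k) → ¬(i = s ∧ j = k) → X' i j = X i j) :
    (∀ v, v ≠ r → v ≠ s →
      (∑ j, |X' r j - X' v j| ^ m =
        ∑ j, |X r j - X v j| ^ m + (|X s k - X v k| ^ m - |X r k - X v k| ^ m)) ∧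
      (∑ j, |X' s j - X' v j| ^ m =
        ∑ j, |X s j - X v j| ^ m - (|X s k - X v k| ^ m - |X r k - X v k| ^ m))) ∧
    (∀ v w, v ≠ r → v ≠ s → w ≠ r → w ≠ s →
      ∑ j, |X' v j - X' w j| ^ m = ∑ j, |X v j - X w j| ^ m) := by
  have hfix : ∀ v (j : Fin q), v ≠ r → v ≠ s → X' v j = X v j := by
    intro v j hv1 hv2
    exact h3 v j (by simp [hv1]) (by simp [hv2])
  have hr : ∀ j : Fin q, j ≠ k → X' r j = X r j := by
    intro j hj
    exact h3 r j (by simp [hj]) (by simp [hrs, hj])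
  have hs : ∀ j : Fin q, j ≠ k → X' s j = X s j := by
    intro j hj
    exact h3 s j (by simp [hj]) (by simp [hrs.symm, hj])
  refine ⟨fun v hvr hvs => ⟨?_, ?_⟩, fun v w hvr hvs hwr hws => ?_⟩
  · rw [← Finset.sum_erase_add _ (fun j => |X' r j - X' v j| ^ m) (Finset.mem_univ k),
        ← Finset.sum_erase_add _ (fun j => |X r j - X v j| ^ m) (Finset.mem_univ k)]
    have hsum : ∑ j ∈ Finset.univ.erase k, |X' r j - X' v j| ^ m
        = ∑ j ∈ Finset.univ.erase k, |X r j - X v j| ^ m := by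
      refine Finset.sum_congr rfl fun j hj => ?_
      have hjk : j ≠ k := (Finset.mem_erase.mp hj).1
      rw [hr j hjk, hfix v j hvr hvs]
    rw [hsum, h1, hfix v k hvr hvs]
    ring
  · rw [← Finset.sum_erase_add _ (fun j => |X' s j - X' v j| ^ m) (Finset.mem_univ k),
        ← Finset.sum_erase_add _ (fun j => |X s j - X v j| ^ m) (Finset.mem_univ k)]
    have hsum : ∑ j ∈ Finset.univ.erase k, |X' s j - X' v j| ^ m
        = ∑ j ∈ Finset.univ.erase k, |X s j - X v j| ^ m := by
      refine Finset.sum_congr rfl fun j hj => ?_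
      have hjk : j ≠ k := (Finset.mem_erase.mp hj).1
      rw [hs j hjk, hfix v j hvr hvs]
    rw [hsum, h2, hfix v k hvr hvs]
    ring
  · refine Finset.sum_congr rfl fun j _ => ?_
    rw [hfix v j hvr hvs, hfix w j hwr hws]
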